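/- For γ > 1, the function u(x,t) = 4 atan[φ(t) sech(x/γ)] with φ(t) = (1/√(γ²−1)) sin((√(γ²−1)/γ) t) satisfies the sine-Gordon equation u_tt = u_xx − sin(u) on ℝ × ℝ, with u(x,0) = 0 and u_t(x,0) = (4/γ) sech(x/γ). -/

import Mathlib

open Real

lemma sin_four_arctan (v : ℝ) :
    Real.sin (4 * Real.arctan v) = 4 * v * (1 - v ^ 2) / (1 + v ^ 2) ^ 2 := by
  have h0 : (0:ℝ) < 1 + v ^ 2 := by positivity
  have hs : Real.sqrt (1 + v ^ 2) ^ 2 = 1 + v ^ 2 := Real.sq_sqrt h0.le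
  have hsne : Real.sqrt (1 + v ^ 2) ≠ 0 := by positivity
  have h4 : (4:ℝ) * Real.arctan v = 2 * (2 * Real.arctan v) := by ring
  rw [h4, Real.sin_two_mul, Real.cos_two_mul, Real.sin_two_mul,
    Real.sin_arctan, Real.cos_arctan]
  field_simp
  linear_combination (-4*v*(1-v^2)*Real.sqrt (1+v^2)^2 - 8*v*(1+v^2)) * hs

theorem sg_key (s c Sh Ch k γ : ℝ) (hγ : γ ≠ 0) (hk : k ≠ 0) (hch : 0 < Ch)
    (h1 : s^2 + c^2 = 1) (h2 : Ch^2 = Sh^2 + 1) (h3 : k^2 = γ^2 - 1) :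
    4 * (((-s * (k/γ)/γ * Ch⁻¹) * (1 + (1/k*s * Ch⁻¹)^2)
        - (c/γ*Ch⁻¹) * (2*(1/k*s*Ch⁻¹)*(c/γ*Ch⁻¹))) / (1 + (1/k*s*Ch⁻¹)^2)^2)
    = 4 * (((1/k*s * (-((Ch/γ)*Ch^2 - Sh*(2*Ch*(Sh/γ)))/(Ch^2)^2/γ)) * (1 + (1/k*s*Ch⁻¹)^2)
        - (1/k*s * (-(Sh/γ)/Ch^2)) * (2*(1/k*s*Ch⁻¹)*(1/k*s*(-(Sh/γ)/Ch^2)))) / (1 + (1/k*s*Ch⁻¹)^2)^2)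
      - 4 * (1/k*s*Ch⁻¹) * (1 - (1/k*s*Ch⁻¹)^2) / (1 + (1/k*s*Ch⁻¹)^2)^2 := by
  have hchne : Ch ≠ 0 := ne_of_gt hch
  have hd : 1 + (1/k*s*Ch⁻¹)^2 ≠ 0 := by positivity
  field_simp
  linear_combination (-2*s*k^2*Ch^2) * h1 + (2*s*k^2*Ch^2) * h2 + (-s*Ch^2*(k^2*Ch^2 - s^2)) * h3

/-- The breather soliton family of the sine-Gordon equation (`γ > 1`):
`u(x,t) = 4 atan(φ(t) sech(x/γ))` with
`φ(t) = sin((√(γ²−1)/γ) t)/√(γ²−1)` solves `u_tt = u_xx − sin u`,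
with `u(x,0) = 0` and `u_t(x,0) = (4/γ) sech(x/γ)`. -/
theorem stmt19 (γ : ℝ) (hγ : 1 < γ) (φ : ℝ → ℝ)
    (hφ : ∀ t : ℝ, φ t =
      (1 / Real.sqrt (γ ^ 2 - 1)) * Real.sin ((Real.sqrt (γ ^ 2 - 1) / γ) * t))
    (u : ℝ → ℝ → ℝ)
    (hu : ∀ x t : ℝ, u x t = 4 * Real.arctan (φ t * (Real.cosh (x / γ))⁻¹)) :
    (∀ x t : ℝ,
      deriv (deriv (fun τ => u x τ)) t =
        deriv (deriv (fun ξ => u ξ t)) x - Real.sin (u x t)) ∧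
    (∀ x : ℝ, u x 0 = 0) ∧
    (∀ x : ℝ, deriv (fun τ => u x τ) 0 = (4 / γ) * (Real.cosh (x / γ))⁻¹) := by
  have hγ0 : (0:ℝ) < γ := by linarith
  have hγne : γ ≠ 0 := ne_of_gt hγ0
  set k := Real.sqrt (γ ^ 2 - 1) with hkdef
  have hk2 : k ^ 2 = γ ^ 2 - 1 := Real.sq_sqrt (by nlinarith)
  have hk0 : 0 < k := Real.sqrt_pos.mpr (by nlinarith)
  have hkne : k ≠ 0 := ne_of_gt hk0
  -- derivative of φ
  have hφd : ∀ t : ℝ, HasDerivAt φ (Real.cos (k / γ * t) / γ) t := by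
    intro t
    have h1 : HasDerivAt (fun t : ℝ => Real.sin (k / γ * t))
        (Real.cos (k / γ * t) * (k / γ)) t := by
      simpa using ((hasDerivAt_id t).const_mul (k / γ)).sin
    have h2 := h1.const_mul (1 / k)
    have h3 : (1 / k) * (Real.cos (k / γ * t) * (k / γ)) = Real.cos (k / γ * t) / γ := by
      field_simp
    rw [h3] at h2
    exact h2.congr_of_eventuallyEq (by filter_upwards with s; rw [hφ s])
  -- first t-derivative of u x ·
  have hut : ∀ x t : ℝ, HasDerivAt (fun τ => u x τ)
      (4 * ((Real.cos (k / γ * t) / γ * (Real.cosh (x / γ))⁻¹) /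
        (1 + (φ t * (Real.cosh (x / γ))⁻¹) ^ 2))) t := by
    intro x t
    set C := (Real.cosh (x / γ))⁻¹ with hC
    have hV : HasDerivAt (fun τ => φ τ * C) (Real.cos (k / γ * t) / γ * C) t :=
      (hφd t).mul_const C
    have h1 := ((Real.hasDerivAt_arctan (φ t * C)).comp t hV).const_mul 4
    have h2 : HasDerivAt (fun τ => u x τ)
        (4 * (1 / (1 + (φ t * C) ^ 2) * (Real.cos (k / γ * t) / γ * C))) t :=
      h1.congr_of_eventuallyEq (by filter_upwards with s; rw [hu x s]; rfl)
    convert h2 using 1; ring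
  have hut' : ∀ x : ℝ, deriv (fun τ => u x τ) =
      fun t => 4 * ((Real.cos (k / γ * t) / γ * (Real.cosh (x / γ))⁻¹) /
        (1 + (φ t * (Real.cosh (x / γ))⁻¹) ^ 2)) := by
    intro x; funext t; exact (hut x t).deriv
  -- second t-derivative
  have hutt : ∀ x t : ℝ, deriv (deriv (fun τ => u x τ)) t =
      4 * (((-Real.sin (k / γ * t) * (k / γ) / γ * (Real.cosh (x / γ))⁻¹) *
          (1 + (φ t * (Real.cosh (x / γ))⁻¹) ^ 2) -
        (Real.cos (k / γ * t) / γ * (Real.cosh (x / γ))⁻¹) *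
          (2 * (φ t * (Real.cosh (x / γ))⁻¹) * (Real.cos (k / γ * t) / γ * (Real.cosh (x / γ))⁻¹))) /
        (1 + (φ t * (Real.cosh (x / γ))⁻¹) ^ 2) ^ 2) := by
    intro x t
    rw [hut' x]
    set C := (Real.cosh (x / γ))⁻¹ with hC
    have hnum : HasDerivAt (fun τ => Real.cos (k / γ * τ) / γ * C)
        (-Real.sin (k / γ * t) * (k / γ) / γ * C) t := by
      have h1 : HasDerivAt (fun τ : ℝ => Real.cos (k / γ * τ))
          (-Real.sin (k / γ * t) * (k / γ)) t := by
        simpa using ((hasDerivAt_id t).const_mul (k / γ)).cos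
      exact (h1.div_const γ).mul_const C
    have hden : HasDerivAt (fun τ => 1 + (φ τ * C) ^ 2)
        (2 * (φ t * C) * (Real.cos (k / γ * t) / γ * C)) t := by
      have h1 := (((hφd t).mul_const C).pow 2).const_add 1
      exact h1.congr_deriv (by norm_num)
    have hdne : (1 + (φ t * C) ^ 2) ≠ 0 := by positivity
    exact ((hnum.div hden hdne).const_mul 4).deriv
  -- derivative of sech(·/γ)
  have hsech : ∀ x : ℝ, HasDerivAt (fun ξ => (Real.cosh (ξ / γ))⁻¹)
      (-(Real.sinh (x / γ) / γ) / Real.cosh (x / γ) ^ 2) x := by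
    intro x
    have h1 : HasDerivAt (fun ξ : ℝ => Real.cosh (ξ / γ)) (Real.sinh (x / γ) / γ) x := by
      simpa [div_eq_mul_inv] using ((hasDerivAt_id x).div_const γ).cosh
    have h2 := h1.inv (ne_of_gt (Real.cosh_pos _))
    exact h2
  -- first x-derivative of u · t
  have hux : ∀ x t : ℝ, HasDerivAt (fun ξ => u ξ t)
      (4 * ((φ t * (-(Real.sinh (x / γ) / γ) / Real.cosh (x / γ) ^ 2)) /
        (1 + (φ t * (Real.cosh (x / γ))⁻¹) ^ 2))) x := by
    intro x t
    have hV : HasDerivAt (fun ξ => φ t * (Real.cosh (ξ / γ))⁻¹)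
        (φ t * (-(Real.sinh (x / γ) / γ) / Real.cosh (x / γ) ^ 2)) x :=
      (hsech x).const_mul (φ t)
    have h1 := ((Real.hasDerivAt_arctan (φ t * (Real.cosh (x / γ))⁻¹)).comp x hV).const_mul 4
    have h2 : HasDerivAt (fun ξ => u ξ t)
        (4 * (1 / (1 + (φ t * (Real.cosh (x / γ))⁻¹) ^ 2) *
          (φ t * (-(Real.sinh (x / γ) / γ) / Real.cosh (x / γ) ^ 2)))) x :=
      h1.congr_of_eventuallyEq (by filter_upwards with s; rw [hu s t]; rfl)
    convert h2 using 1; ring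
  have hux' : ∀ t : ℝ, deriv (fun ξ => u ξ t) = fun x =>
      4 * ((φ t * (-(Real.sinh (x / γ) / γ) / Real.cosh (x / γ) ^ 2)) /
        (1 + (φ t * (Real.cosh (x / γ))⁻¹) ^ 2)) := by
    intro t; funext x; exact (hux x t).deriv
  -- second x-derivative
  have huxx : ∀ x t : ℝ, deriv (deriv (fun ξ => u ξ t)) x =
      4 * (((φ t * (-((Real.cosh (x / γ) / γ) * Real.cosh (x / γ) ^ 2 -
            Real.sinh (x / γ) * (2 * Real.cosh (x / γ) * (Real.sinh (x / γ) / γ))) /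
            (Real.cosh (x / γ) ^ 2) ^ 2 / γ)) *
          (1 + (φ t * (Real.cosh (x / γ))⁻¹) ^ 2) -
        (φ t * (-(Real.sinh (x / γ) / γ) / Real.cosh (x / γ) ^ 2)) *
          (2 * (φ t * (Real.cosh (x / γ))⁻¹) *
            (φ t * (-(Real.sinh (x / γ) / γ) / Real.cosh (x / γ) ^ 2)))) /
        (1 + (φ t * (Real.cosh (x / γ))⁻¹) ^ 2) ^ 2) := by
    intro x t
    rw [hux' t]
    have hchne : Real.cosh (x / γ) ≠ 0 := ne_of_gt (Real.cosh_pos _)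
    have hch2ne : Real.cosh (x / γ) ^ 2 ≠ 0 := pow_ne_zero 2 hchne
    have hsinh : HasDerivAt (fun ξ : ℝ => Real.sinh (ξ / γ)) (Real.cosh (x / γ) / γ) x := by
      simpa [div_eq_mul_inv] using ((hasDerivAt_id x).div_const γ).sinh
    have hch : HasDerivAt (fun ξ : ℝ => Real.cosh (ξ / γ)) (Real.sinh (x / γ) / γ) x := by
      simpa [div_eq_mul_inv] using ((hasDerivAt_id x).div_const γ).cosh
    have hq : HasDerivAt (fun ξ => Real.sinh (ξ / γ) / Real.cosh (ξ / γ) ^ 2)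
        (((Real.cosh (x / γ) / γ) * Real.cosh (x / γ) ^ 2 -
          Real.sinh (x / γ) * (2 * Real.cosh (x / γ) * (Real.sinh (x / γ) / γ))) /
          (Real.cosh (x / γ) ^ 2) ^ 2) x := by
      have hp : HasDerivAt (fun ξ : ℝ => Real.cosh (ξ / γ) ^ 2)
          (2 * Real.cosh (x / γ) * (Real.sinh (x / γ) / γ)) x := by
        have := hch.pow 2
        exact this.congr_deriv (by norm_num)
      exact hsinh.div hp hch2ne
    have hnum : HasDerivAt (fun ξ => φ t * (-(Real.sinh (ξ / γ) / γ) / Real.cosh (ξ / γ) ^ 2))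
        (φ t * (-((Real.cosh (x / γ) / γ) * Real.cosh (x / γ) ^ 2 -
            Real.sinh (x / γ) * (2 * Real.cosh (x / γ) * (Real.sinh (x / γ) / γ))) /
            (Real.cosh (x / γ) ^ 2) ^ 2 / γ)) x := by
      have h1 := ((hq.neg).div_const γ).const_mul (φ t)
      have h2 : (fun ξ => φ t * (-(Real.sinh (ξ / γ) / γ) / Real.cosh (ξ / γ) ^ 2)) =
          (fun ξ => φ t * (-(Real.sinh (ξ / γ) / Real.cosh (ξ / γ) ^ 2) / γ)) := by
        funext ξ; ring
      rw [h2]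
      exact h1.congr_deriv (by ring)
    have hden : HasDerivAt (fun ξ => 1 + (φ t * (Real.cosh (ξ / γ))⁻¹) ^ 2)
        (2 * (φ t * (Real.cosh (x / γ))⁻¹) *
          (φ t * (-(Real.sinh (x / γ) / γ) / Real.cosh (x / γ) ^ 2))) x := by
      have h1 := (((hsech x).const_mul (φ t)).pow 2).const_add 1
      exact h1.congr_deriv (by norm_num)
    have hdne : (1 + (φ t * (Real.cosh (x / γ))⁻¹) ^ 2) ≠ 0 := by positivity
    exact ((hnum.div hden hdne).const_mul 4).deriv
  refine ⟨?_, ?_, ?_⟩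
  · intro x t
    rw [hutt x t, huxx x t, hu x t, sin_four_arctan, hφ t]
    exact sg_key (Real.sin (k / γ * t)) (Real.cos (k / γ * t)) (Real.sinh (x / γ))
      (Real.cosh (x / γ)) k γ hγne hkne (Real.cosh_pos _)
      (Real.sin_sq_add_cos_sq _) (by rw [Real.cosh_sq]) hk2
  · intro x
    rw [hu x 0, hφ 0]
    simp
  · intro x
    have h := (hut x 0).deriv
    rw [h, hφ 0]
    simp
    ring
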